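/- If z₀ is a fixed point of Complex.log with |z₀| > 1 and z₀ off the nonpositive real axis, then there is a neighborhood U of z₀ such that for every w ∈ U, the sequence of iterates (Complex.log)^[n] w converges to z₀. -/

import Mathlib

theorem stmt_16 (z₀ : ℂ) (hfix : Complex.log z₀ = z₀) (habs : 1 < ‖z₀‖)
    (hax : ¬(z₀.im = 0 ∧ z₀.re ≤ 0)) :
    ∃ U ∈ nhds z₀, ∀ w ∈ U,
      Filter.Tendsto (fun n => Complex.log^[n] w) Filter.atTop (nhds z₀) := by
  have hslit : z₀.im ≠ 0 ∨ 0 < z₀.re := by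
    by_cases h : z₀.im = 0
    · right
      by_contra h'
      exact hax ⟨h, le_of_not_gt h'⟩
    · exact Or.inl h
  have hd : HasDerivAt Complex.log z₀⁻¹ z₀ := Complex.hasDerivAt_log (Complex.mem_slitPlane_iff.mpr (hslit.symm.imp id id))
  set L : ℝ := ‖z₀⁻¹‖ with hL
  have hL1 : L < 1 := by
    rw [hL, norm_inv]
    have h0 : (0:ℝ) < ‖z₀‖ := lt_trans one_pos habs
    rw [inv_lt_one_iff₀]
    right; exact habs
  have hL0 : 0 ≤ L := norm_nonneg _
  set c : ℝ := (L + 1) / 2 with hc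
  have hc0 : 0 ≤ c := by positivity
  have hc1 : c < 1 := by rw [hc]; linarith
  have hε : (0:ℝ) < (1 - L) / 2 := by linarith
  have hlo := (hasDerivAt_iff_isLittleO.mp hd).def hε
  rw [hfix] at hlo
  -- eventually: ‖log w - z₀‖ ≤ c * ‖w - z₀‖
  have hev : ∀ᶠ w in nhds z₀, ‖Complex.log w - z₀‖ ≤ c * ‖w - z₀‖ := by
    filter_upwards [hlo] with w hw
    have h1 : ‖Complex.log w - z₀‖ ≤ ‖Complex.log w - z₀ - (w - z₀) • z₀⁻¹‖
        + ‖(w - z₀) • z₀⁻¹‖ := by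
      have := norm_sub_norm_le (Complex.log w - z₀) ((w - z₀) • z₀⁻¹)
      calc ‖Complex.log w - z₀‖
          = ‖(Complex.log w - z₀ - (w - z₀) • z₀⁻¹) + (w - z₀) • z₀⁻¹‖ := by ring_nf
        _ ≤ _ := norm_add_le _ _
    have h2 : ‖(w - z₀) • z₀⁻¹‖ = L * ‖w - z₀‖ := by
      rw [smul_eq_mul, norm_mul, mul_comm]
    calc ‖Complex.log w - z₀‖ ≤ ‖Complex.log w - z₀ - (w - z₀) • z₀⁻¹‖
          + ‖(w - z₀) • z₀⁻¹‖ := h1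
      _ ≤ (1 - L) / 2 * ‖w - z₀‖ + L * ‖w - z₀‖ := by rw [h2]; linarith [hw]
      _ = c * ‖w - z₀‖ := by rw [hc]; ring
  obtain ⟨r, hr0, hr⟩ := Metric.eventually_nhds_iff.mp hev
  refine ⟨Metric.ball z₀ r, Metric.ball_mem_nhds z₀ hr0, fun w hw => ?_⟩
  have key : ∀ n, dist (Complex.log^[n] w) z₀ ≤ c ^ n * dist w z₀ ∧
      Complex.log^[n] w ∈ Metric.ball z₀ r := by
    intro n
    induction n with
    | zero => simpa using hw
    | succ n ih =>
      obtain ⟨ih1, ih2⟩ := ih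
      rw [Function.iterate_succ_apply']
      have hb : dist (Complex.log^[n] w) z₀ < r := Metric.mem_ball.mp ih2
      have hstep : ‖Complex.log (Complex.log^[n] w) - z₀‖
          ≤ c * ‖Complex.log^[n] w - z₀‖ := hr hb
      have hd1 : dist (Complex.log (Complex.log^[n] w)) z₀
          ≤ c * dist (Complex.log^[n] w) z₀ := by
        simpa [dist_eq_norm] using hstep
      constructor
      · calc dist (Complex.log (Complex.log^[n] w)) z₀
            ≤ c * dist (Complex.log^[n] w) z₀ := hd1
          _ ≤ c * (c ^ n * dist w z₀) := by
              exact mul_le_mul_of_nonneg_left ih1 hc0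
          _ = c ^ (n + 1) * dist w z₀ := by ring
      · rw [Metric.mem_ball]
        calc dist (Complex.log (Complex.log^[n] w)) z₀
            ≤ c * dist (Complex.log^[n] w) z₀ := hd1
          _ ≤ 1 * dist (Complex.log^[n] w) z₀ :=
              mul_le_mul_of_nonneg_right hc1.le dist_nonneg
          _ = dist (Complex.log^[n] w) z₀ := one_mul _
          _ < r := hb
  rw [tendsto_iff_dist_tendsto_zero]
  have hgeo : Filter.Tendsto (fun n => c ^ n * dist w z₀) Filter.atTop (nhds 0) := by
    have := tendsto_pow_atTop_nhds_zero_of_lt_one hc0 hc1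
    simpa using this.mul_const (dist w z₀)
  exact squeeze_zero (fun n => dist_nonneg) (fun n => (key n).1) hgeo
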